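/- Let G be a 3-leaf power of a tree T rooted at a non-leaf vertex, where the children of each internal node are ordered so that leaves come before non-leaf children, and let v_1,...,v_n be the leaves of T in DFS order. Then the corresponding vertex labeling of G is non-jumping. -/

import Mathlib

/-- A labeling `σ : Fin n ≃ V` of the vertices of `G` is *non-jumping* if for all
indices `i < j < k < l`, whenever `(v i, v k)` and `(v j, v l)` are edges,
`(v j, v k)` is also an edge. -/
def NonJumping {V : Type*} {n : ℕ} (G : SimpleGraph V) (σ : Fin n ≃ V) : Prop :=
  ∀ i j k l : Fin n, i < j → j < k → k < l →
    G.Adj (σ i) (σ k) → G.Adj (σ j) (σ l) → G.Adj (σ j) (σ k)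

/-- Two leaves of a rooted tree (given by its parent map) are *T3-adjacent* if
they are distinct and are siblings, or one's parent is the other's grandparent
(i.e. one is an uncle of the other). This is the adjacency relation of the
3-leaf power of the tree, restricted to leaves. -/
def T3Adj {α : Type*} (parent : α → α) (a b : α) : Prop :=
  a ≠ b ∧ (parent a = parent b ∨ parent a = parent (parent b) ∨
    parent b = parent (parent a))

/-- Let `G` be a 3-leaf power of a finite tree `T` rooted at a non-leaf vertex,
and let `v 0, …, v (n-1)` be the leaves of `T` listed in a DFS order in which at
each internal node the leaf children are visited before the non-leaf children
(so leaf children of a node precede all deeper leaves in its subtree, and each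
subtree occupies a consecutive interval of leaves). Then the corresponding
labeling of `G` is non-jumping. -/

private lemma aux_cycle {α : Type*} (p : α → α) (root : α) (d : α → ℕ)
    (hroot : p root = root) (hd : ∀ x, x ≠ root → d (p x) < d x) :
    ∀ u m, 1 ≤ m → p^[m] u = u → u = root := by
  have key : ∀ N u m, d u ≤ N → 1 ≤ m → p^[m] u = u → u = root := by
    intro N
    induction N with
    | zero =>
      intro u m hdu hm hcyc
      by_contra h
      have := hd u h
      omega
    | succ N IH =>
      intro u m hdu hm hcyc
      by_cases h : u = root
      · exact h
      have h1 : d (p u) < d u := hd u h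
      have h2 : p^[m] (p u) = p u := by
        rw [← Function.iterate_succ_apply, Function.iterate_succ_apply', hcyc]
      have hpu : p u = root := IH (p u) m (by omega) hm h2
      obtain ⟨m', rfl⟩ : ∃ m', m = m' + 1 := ⟨m - 1, by omega⟩
      have : p^[m' + 1] u = root := by
        rw [Function.iterate_succ_apply, hpu, Function.iterate_fixed hroot]
      exact absurd (hcyc ▸ this) h
  intro u m hm hcyc
  exact key (d u) u m le_rfl hm hcyc

private lemma aux_core {α : Type*} (p : α → α) (root : α) (d : α → ℕ)
    (hroot : p root = root) (hd : ∀ x, x ≠ root → d (p x) < d x)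
    {x z y w : α} {s t : ℕ} (hz : p z = x) (hy : p y = x) (hyx : y ≠ x)
    (hst : s < t) (hws : p^[s] w = z) (hwt : p^[t] w = y) : False := by
  obtain ⟨m', hm⟩ : ∃ m', t = (m' + 1) + s := ⟨t - s - 1, by omega⟩
  have hy2 : p^[m' + 1] z = y := by
    rw [← hws, ← Function.iterate_add_apply, ← hm, hwt]
  have hx : p^[m' + 1] x = x := by
    conv_lhs => rw [← hz, ← Function.iterate_succ_apply]
    rw [Function.iterate_succ_apply', hy2, hy]
  have hxroot : x = root := aux_cycle p root d hroot hd x (m' + 1) (by omega) hx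
  apply hyx
  rw [← hy2, Function.iterate_succ_apply, hz, hxroot, Function.iterate_fixed hroot, ← hxroot]

private lemma aux_disjoint {α : Type*} (p : α → α) (root : α) (d : α → ℕ)
    (hroot : p root = root) (hd : ∀ x, x ≠ root → d (p x) < d x)
    {x z y w : α} (hz : p z = x) (hy : p y = x) (hzx : z ≠ x) (hyx : y ≠ x)
    (hzy : z ≠ y) (hs : ∃ s, p^[s] w = z) (ht : ∃ t, p^[t] w = y) : False := by
  obtain ⟨s, hws⟩ := hs
  obtain ⟨t, hwt⟩ := ht
  rcases lt_trichotomy s t with h | h | h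
  · exact aux_core p root d hroot hd hz hy hyx h hws hwt
  · exact hzy (by rw [← hws, h, hwt])
  · exact aux_core p root d hroot hd hy hz hzx h hwt hws


theorem threeLeafPower_nonJumping {α : Type*} {n : ℕ}
    (parent : α → α) (root : α) (d : α → ℕ)
    (hroot : parent root = root)
    (hd : ∀ x, x ≠ root → d (parent x) < d x)
    (hrootNonleaf : ∃ y, y ≠ root ∧ parent y = root)
    (v : Fin n → α) (hinj : Function.Injective v)
    (hleaf : ∀ (i : Fin n) (y : α), parent y ≠ v i)
    (hleavesAll : ∀ x : α, (∀ y : α, parent y ≠ x) → ∃ i : Fin n, v i = x)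
    (hsubtree : ∀ (x : α) (i j k : Fin n), i ≤ j → j ≤ k →
      (∃ t : ℕ, parent^[t] (v i) = x) → (∃ t : ℕ, parent^[t] (v k) = x) →
      ∃ t : ℕ, parent^[t] (v j) = x)
    (hleafFirst : ∀ (x : α) (i j : Fin n), parent (v i) = x →
      (∃ t : ℕ, parent^[t] (v j) = x) → parent (v j) ≠ x → i < j)
    (G : SimpleGraph (Fin n))
    (hAdj : ∀ i j : Fin n, G.Adj i j ↔ T3Adj parent (v i) (v j)) :
    NonJumping G (Equiv.refl (Fin n)) := by
  classical
  intro i j k l hij hjk hkl hik hjl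
  simp only [Equiv.refl_apply] at hik hjl ⊢
  rw [hAdj] at hik hjl ⊢
  have hbc_ne : v j ≠ v k := fun h => hjk.ne (hinj h)
  -- the sibling lemma: if two leaves share a parent, so does any leaf between them
  have sib : ∀ (x : α) (i' j' k' : Fin n), i' ≤ j' → j' ≤ k' →
      parent (v i') = x → parent (v k') = x → parent (v j') = x := by
    intro x i' j' k' h1 h2 hi' hk'
    by_contra h
    have hdesc : ∃ t, parent^[t] (v j') = x :=
      hsubtree x i' j' k' h1 h2 ⟨1, by simpa using hi'⟩ ⟨1, by simpa using hk'⟩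
    exact absurd (hleafFirst x k' j' hk' hdesc h) h2.not_gt
  obtain ⟨hne_ac, hcase⟩ := hik
  obtain ⟨hne_be, hcase2⟩ := hjl
  rcases hcase with h1 | h2 | h3
  · -- siblings
    exact ⟨hbc_ne, Or.inl (sib (parent (v k)) i j k hij.le hjk.le h1 rfl)⟩
  · -- v i is an uncle of v k
    by_cases hyx : parent (v k) = parent (v i)
    · exact ⟨hbc_ne, Or.inl (sib (parent (v k)) i j k hij.le hjk.le hyx.symm rfl)⟩
    · set x := parent (v i) with hxdef
      have hcx : ∃ t, parent^[t] (v k) = x :=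
        ⟨2, by show parent (parent (v k)) = x; exact h2.symm⟩
      have hbdesc : ∃ t, parent^[t] (v j) = x :=
        hsubtree x i j k hij.le hjk.le ⟨1, by simp [hxdef]⟩ hcx
      by_cases hbx : parent (v j) = x
      · exact ⟨hbc_ne, Or.inr (Or.inl (hbx.trans h2))⟩
      · by_cases hby : parent (v j) = parent (v k)
        · exact ⟨hbc_ne, Or.inl hby⟩
        · exfalso
          set t₀ := Nat.find hbdesc with ht₀def
          have ht₀ : parent^[t₀] (v j) = x := Nat.find_spec hbdesc
          have ht0ne0 : t₀ ≠ 0 := by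
            intro h
            rw [h] at ht₀
            simp only [Function.iterate_zero, id_eq] at ht₀
            exact hleaf j (v i) ht₀.symm
          have ht0ne1 : t₀ ≠ 1 := by
            intro h
            rw [h] at ht₀
            simp only [Function.iterate_one] at ht₀
            exact hbx ht₀
          have ht02 : 2 ≤ t₀ := by omega
          set z := parent^[t₀ - 1] (v j) with hzdef
          have hz : parent z = x := by
            have ht' : parent^[t₀ - 1 + 1] (v j) = x := by
              rw [show t₀ - 1 + 1 = t₀ from by omega]; exact ht₀
            rw [Function.iterate_succ_apply'] at ht'
            rw [hzdef]; exact ht'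
          have hznx : z ≠ x := by
            rw [hzdef]; exact Nat.find_min hbdesc (by omega)
          have hdzb : ∃ s, parent^[s] (v j) = z := ⟨t₀ - 1, rfl⟩
          have hdzpb : parent^[t₀ - 2] (parent (v j)) = z := by
            rw [hzdef, show t₀ - 1 = (t₀ - 2) + 1 from by omega,
              Function.iterate_succ_apply]
          by_cases hzy : z = parent (v k)
          · exact absurd (hleafFirst (parent (v k)) k j rfl
              ⟨t₀ - 1, hzdef.symm.trans hzy⟩ hby) (lt_asymm hjk)
          · have hdisj : (∃ s, parent^[s] (v l) = z) → False := by
              intro hdze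
              have hdzc : ∃ s, parent^[s] (v k) = z :=
                hsubtree z j k l hjk.le hkl.le hdzb hdze
              exact aux_disjoint parent root d hroot hd hz h2.symm hznx hyx hzy
                hdzc ⟨1, by simp⟩
            rcases hcase2 with hbe1 | hbe2 | hbe3
            · exact hdisj ⟨t₀ - 1, by
                rw [show t₀ - 1 = (t₀ - 2) + 1 from by omega,
                  Function.iterate_succ_apply, hbe1.symm]
                exact hdzpb⟩
            · exact hdisj ⟨t₀, by
                rw [show t₀ = (t₀ - 2) + 2 from by omega, Function.iterate_add_apply,
                  show parent^[2] (v l) = parent (parent (v l)) from rfl, ← hbe2]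
                exact hdzpb⟩
            · by_cases ht03 : 3 ≤ t₀
              · exact hdisj ⟨t₀ - 2, by
                  rw [show t₀ - 2 = (t₀ - 3) + 1 from by omega,
                    Function.iterate_succ_apply, hbe3]
                  have h' : parent^[(t₀ - 3) + 1] (parent (v j)) = z := by
                    rw [show (t₀ - 3) + 1 = t₀ - 2 from by omega]; exact hdzpb
                  rw [Function.iterate_succ_apply] at h'
                  exact h'⟩
              · have ht2 : t₀ = 2 := by omega
                have hzb : z = parent (v j) := by rw [hzdef, ht2]; rfl
                have hex : parent (v l) = x := by rw [hbe3, ← hzb, hz]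
                exact absurd (hleafFirst x l k hex hcx hyx) (lt_asymm hkl)
  · -- v k is an uncle of v i
    by_cases hac : parent (v i) = parent (v k)
    · exact ⟨hbc_ne, Or.inl (sib (parent (v k)) i j k hij.le hjk.le hac rfl)⟩
    · exfalso
      have hax : ∃ t, parent^[t] (v i) = parent (v k) :=
        ⟨2, by show parent (parent (v i)) = _; exact h3.symm⟩
      exact absurd (hleafFirst (parent (v k)) k i rfl hax hac)
        (lt_asymm (hij.trans hjk))
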